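/- For every integer c ≥ 1, the map from (ℝ_{≥0})^c to ℝ^{c−1} × ℝ_{≥0} sending (t₁, t₂, …, t_c) to (t₂ − t₁, t₃ − t₁, …, t_c − t₁, t₁·t₂⋯t_c) is a homeomorphism; that is, it is bijective, continuous, and its inverse is continuous. (In particular, via this homeomorphism the product map (ℝ_{≥0})^c → ℝ_{≥0}, (t₁,…,t_c) ↦ t₁⋯t_c, is identified with the projection ℝ^{c−1} × ℝ_{≥0} → ℝ_{≥0}.) -/

import Mathlib

private lemma aux_delta_zero (m : ℕ) (t s : Fin (m + 1) → NNReal) (δ : ℝ) (hδ : 0 ≤ δ)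
    (h : ∀ j, (t j : ℝ) = (s j : ℝ) + δ)
    (hp : ∏ j, (t j : ℝ) = ∏ j, (s j : ℝ)) : δ = 0 := by
  rcases eq_or_lt_of_le hδ with h0 | h0
  · exact h0.symm
  exfalso
  have htpos : ∀ j, 0 < (t j : ℝ) := fun j => by
    rw [h j]; positivity
  have hprodt : 0 < ∏ j, (t j : ℝ) := Finset.prod_pos fun j _ => htpos j
  have hspos : ∀ j, 0 < (s j : ℝ) := by
    intro j
    by_contra hj
    push_neg at hj
    have : (s j : ℝ) = 0 := le_antisymm hj (s j).coe_nonneg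
    have : ∏ j, (s j : ℝ) = 0 := Finset.prod_eq_zero (Finset.mem_univ j) this
    rw [hp, this] at hprodt
    exact lt_irrefl 0 hprodt
  have : ∏ j, (s j : ℝ) < ∏ j, (t j : ℝ) := by
    apply Finset.prod_lt_prod_of_nonempty
    · exact fun j _ => hspos j
    · intro j _
      rw [h j]; linarith
    · exact Finset.univ_nonempty
  rw [hp] at this
  exact lt_irrefl _ this

/-- For `c ≥ 1`, the map `(ℝ_{≥0})^c → ℝ^{c-1} × ℝ_{≥0}` sending
`(t₁, …, t_c)` to `(t₂ − t₁, …, t_c − t₁, t₁ t₂ ⋯ t_c)` is a homeomorphism.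
In particular it identifies the product map `(t₁,…,t_c) ↦ t₁⋯t_c` with the
projection `ℝ^{c-1} × ℝ_{≥0} → ℝ_{≥0}`. -/
theorem isHomeomorph_differences_and_product (c : ℕ) (hc : 1 ≤ c) :
    IsHomeomorph (fun t : Fin c → NNReal =>
      ((fun i : Fin (c - 1) => ((t ⟨i.1 + 1, by omega⟩ : ℝ) - (t ⟨0, by omega⟩ : ℝ)),
        ∏ i : Fin c, t i) : (Fin (c - 1) → ℝ) × NNReal)) := by
  obtain ⟨n, rfl⟩ : ∃ n, c = n + 1 := ⟨c - 1, by omega⟩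
  set F : (Fin (n + 1) → NNReal) → (Fin (n + 1 - 1) → ℝ) × NNReal := fun t =>
    ((fun i : Fin (n + 1 - 1) =>
      ((t ⟨i.1 + 1, by omega⟩ : ℝ) - (t ⟨0, by omega⟩ : ℝ)),
      ∏ i : Fin (n + 1), t i) : (Fin (n + 1 - 1) → ℝ) × NNReal) with hF
  -- basic index facts
  have hidx0 : ∀ (h : (0:ℕ) < n + 1), (⟨0, h⟩ : Fin (n + 1)) = 0 := fun h => rfl
  have hidxs : ∀ (i : Fin n) (h : i.1 + 1 < n + 1), (⟨i.1 + 1, h⟩ : Fin (n + 1)) = i.succ :=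
    fun i h => rfl
  -- Continuity
  have hcoord : ∀ j : Fin (n + 1), Continuous fun t : Fin (n + 1) → NNReal => (t j : ℝ) :=
    fun j => NNReal.continuous_coe.comp (continuous_apply j)
  have hcont : Continuous F := by
    apply Continuous.prodMk
    · apply continuous_pi
      intro i
      exact (hcoord _).sub (hcoord _)
    · exact continuous_finset_prod _ fun i _ => continuous_apply i
  rw [isHomeomorph_iff_continuous_isClosedMap_bijective]
  refine ⟨hcont, ?_, ?_, ?_⟩
  · -- Closed map, via properness
    have hproper : IsProperMap F := by
      rw [isProperMap_iff_isCompact_preimage]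
      refine ⟨hcont, fun K hK => ?_⟩
      obtain ⟨r, hr⟩ := (Metric.isBounded_iff_subset_closedBall
        ((fun _ => 0, 0) : (Fin (n + 1 - 1) → ℝ) × NNReal)).mp hK.isBounded
      set M : ℝ := max r 0 with hM
      have hM0 : 0 ≤ M := le_max_right r 0
      have hrM : r ≤ M := le_max_left r 0
      -- bounds for any t in the preimage
      have key : ∀ t ∈ F ⁻¹' K, ∀ j, (t j : ℝ) ≤ 3 * M + 1 := by
        intro t ht
        have hFtK : F t ∈ K := ht
        have hball := hr hFtK
        rw [Metric.mem_closedBall, Prod.dist_eq, max_le_iff] at hball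
        obtain ⟨hball1, hball2⟩ := hball
        have hd : ∀ i : Fin (n + 1 - 1),
            |(t ⟨i.1 + 1, by omega⟩ : ℝ) - (t ⟨0, by omega⟩ : ℝ)| ≤ M := by
          intro i
          have h2 : dist ((F t).1 i) ((fun _ => (0:ℝ)) i) ≤ dist ((F t).1) (fun _ => (0:ℝ)) :=
            dist_le_pi_dist ((F t).1) (fun _ => (0:ℝ)) i
          have h3 : dist ((F t).1 i) (0:ℝ) ≤ M := le_trans h2 (le_trans hball1 hrM)
          rw [Real.dist_eq, sub_zero] at h3
          exact h3
        have hprod : ∏ j, (t j : ℝ) ≤ M := by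
          have h2 : dist ((F t).2) (0:NNReal) ≤ M := le_trans hball2 hrM
          rw [NNReal.dist_eq] at h2
          have heq : ((F t).2 : ℝ) = ∏ j, (t j : ℝ) := by
            simp [hF, NNReal.coe_prod]
          simp only [NNReal.coe_zero, sub_zero] at h2
          rw [heq] at h2
          have : |∏ j, (t j : ℝ)| = ∏ j, (t j : ℝ) := abs_of_nonneg
            (Finset.prod_nonneg fun j _ => (t j).coe_nonneg)
          rw [this] at h2
          exact h2
        -- first bound t 0
        have ht0 : (t 0 : ℝ) ≤ 2 * M + 1 := by
          by_contra h0
          push_neg at h0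
          have hlow : ∀ j, M + 1 ≤ (t j : ℝ) := by
            intro j
            induction j using Fin.cases with
            | zero => linarith
            | succ i =>
              have h4 := hd ⟨i.1, by omega⟩
              rw [abs_le] at h4
              have h5 : (⟨(⟨i.1, (by omega : i.1 < n + 1 - 1)⟩ : Fin (n+1-1)).1 + 1, by omega⟩
                  : Fin (n + 1)) = i.succ := rfl
              have h6 : (⟨0, (by omega : 0 < n + 1)⟩ : Fin (n + 1)) = 0 := rfl
              rw [h5, h6] at h4
              linarith [h4.1]
          have : (M + 1) ^ (n + 1) ≤ ∏ j, (t j : ℝ) := by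
            calc (M + 1) ^ (n + 1) = ∏ _j : Fin (n + 1), (M + 1) := by
                  rw [Finset.prod_const, Finset.card_univ, Fintype.card_fin]
              _ ≤ ∏ j, (t j : ℝ) :=
                  Finset.prod_le_prod (fun j _ => by linarith) (fun j _ => hlow j)
          have hpow : M + 1 ≤ (M + 1) ^ (n + 1) :=
            le_self_pow₀ (by linarith) (Nat.succ_ne_zero n)
          linarith
        intro j
        induction j using Fin.cases with
        | zero => linarith
        | succ i =>
          have h4 := hd ⟨i.1, by omega⟩
          rw [abs_le] at h4
          have h5 : (⟨(⟨i.1, (by omega : i.1 < n + 1 - 1)⟩ : Fin (n+1-1)).1 + 1, by omega⟩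
              : Fin (n + 1)) = i.succ := rfl
          have h6 : (⟨0, (by omega : 0 < n + 1)⟩ : Fin (n + 1)) = 0 := rfl
          rw [h5, h6] at h4
          linarith [h4.2]
      -- preimage is contained in a compact box
      set R : NNReal := Real.toNNReal (3 * M + 1) with hR
      have hsub : F ⁻¹' K ⊆ Set.Icc (0 : Fin (n + 1) → NNReal) (fun _ => R) := by
        intro t ht
        constructor
        · intro j; exact zero_le
        · intro j
          rw [← NNReal.coe_le_coe, Real.coe_toNNReal _ (by linarith)]
          exact key t ht j
      exact (isCompact_Icc).of_isClosed_subset (hK.isClosed.preimage hcont) hsub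
    exact hproper.isClosedMap
  · -- Injective
    intro t s hts
    have h1 : ∀ i : Fin (n + 1 - 1), (t ⟨i.1 + 1, by omega⟩ : ℝ) - (t ⟨0, by omega⟩ : ℝ)
        = (s ⟨i.1 + 1, by omega⟩ : ℝ) - (s ⟨0, by omega⟩ : ℝ) := fun i =>
      congrFun (congrArg Prod.fst hts) i
    have h2 : ∏ i, t i = ∏ i, s i := congrArg Prod.snd hts
    have h2' : ∏ i, (t i : ℝ) = ∏ i, (s i : ℝ) := by
      rw [← NNReal.coe_prod, ← NNReal.coe_prod, h2]
    set δ : ℝ := (t 0 : ℝ) - (s 0 : ℝ) with hδ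
    have hall : ∀ j, (t j : ℝ) = (s j : ℝ) + δ := by
      intro j
      induction j using Fin.cases with
      | zero => simp [hδ]
      | succ i =>
        have := h1 ⟨i.1, by omega⟩
        have hsi : (⟨(⟨i.1, by omega⟩ : Fin (n + 1 - 1)).1 + 1, by omega⟩ : Fin (n + 1))
            = i.succ := rfl
        rw [hsi] at this
        simp only [hδ]
        have h0 : (⟨0, by omega⟩ : Fin (n + 1)) = 0 := rfl
        rw [h0] at this
        linarith
    have hδ0 : δ = 0 := by
      rcases le_or_gt 0 δ with h | h
      · exact aux_delta_zero n t s δ h hall h2'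
      · have hall' : ∀ j, (s j : ℝ) = (t j : ℝ) + (-δ) := fun j => by
          have := hall j; linarith
        have := aux_delta_zero n s t (-δ) (by linarith) hall' h2'.symm
        linarith
    funext j
    have := hall j
    rw [hδ0, add_zero] at this
    exact NNReal.coe_injective this
  · -- Surjective
    rintro ⟨d, p⟩
    -- lower bound for admissible x
    set x₀ : ℝ := ((Finset.univ.sup fun i : Fin (n + 1 - 1) => Real.toNNReal (-d i) : NNReal) : ℝ)
      with hx₀
    have hx₀0 : 0 ≤ x₀ := NNReal.coe_nonneg _
    have hx₀d : ∀ i : Fin (n + 1 - 1), -d i ≤ x₀ := by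
      intro i
      calc -d i ≤ (Real.toNNReal (-d i) : ℝ) := Real.le_coe_toNNReal _
        _ ≤ x₀ := by
          rw [hx₀]
          exact NNReal.coe_le_coe.mpr (Finset.le_sup
            (f := fun i : Fin (n + 1 - 1) => Real.toNNReal (-d i)) (Finset.mem_univ i))
    set g : ℝ → ℝ := fun x => x * ∏ i : Fin (n + 1 - 1), (x + d i) with hg
    have hgc : Continuous g := by
      apply Continuous.mul continuous_id
      exact continuous_finset_prod _ fun i _ => continuous_id.add continuous_const
    have hg0 : g x₀ = 0 := by
      rcases eq_or_lt_of_le hx₀0 with h0 | h0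
      · show x₀ * ∏ i : Fin (n + 1 - 1), (x₀ + d i) = 0
        rw [← h0, zero_mul]
      · -- the sup is positive, hence attained
        have hne : (Finset.univ : Finset (Fin (n + 1 - 1))).Nonempty := by
          by_contra hne
          rw [Finset.not_nonempty_iff_eq_empty] at hne
          rw [hx₀, hne] at h0
          simp at h0
        obtain ⟨i, _, hi⟩ := Finset.exists_mem_eq_sup Finset.univ hne
          (fun i : Fin (n + 1 - 1) => Real.toNNReal (-d i))
        have hpos : (0:ℝ) < -d i := by
          have h7 : (0:ℝ) < ((Real.toNNReal (-d i) : NNReal) : ℝ) := by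
            rw [hx₀, hi] at h0; exact h0
          rw [Real.coe_toNNReal'] at h7
          rcases lt_max_iff.mp h7 with h8 | h8
          · exact h8
          · exact absurd h8 (lt_irrefl 0)
        have hxi : x₀ = -d i := by
          rw [hx₀, hi, Real.coe_toNNReal']
          exact max_eq_left hpos.le
        have hz : x₀ + d i = 0 := by rw [hxi]; ring
        show x₀ * ∏ i : Fin (n + 1 - 1), (x₀ + d i) = 0
        rw [Finset.prod_eq_zero (Finset.mem_univ i) hz, mul_zero]
    -- find the root by IVT
    set b : ℝ := x₀ + (p : ℝ) + 1 with hb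
    have hgb : (p : ℝ) ≤ g b := by
      have hfac : ∀ i : Fin (n + 1 - 1), (p : ℝ) + 1 ≤ b + d i := by
        intro i
        have := hx₀d i
        rw [hb]; linarith
      have h1 : ((p : ℝ) + 1) ^ (n + 1 - 1) ≤ ∏ i : Fin (n + 1 - 1), (b + d i) := by
        calc ((p : ℝ) + 1) ^ (n + 1 - 1)
            = ∏ _i : Fin (n + 1 - 1), ((p : ℝ) + 1) := by
              rw [Finset.prod_const, Finset.card_univ, Fintype.card_fin]
          _ ≤ _ := Finset.prod_le_prod (fun i _ => by positivity) (fun i _ => hfac i)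
      have hone : (1:ℝ) ≤ ((p : ℝ) + 1) ^ (n + 1 - 1) :=
        one_le_pow₀ (by linarith [p.coe_nonneg])
      have hbpos : (p : ℝ) + 1 ≤ b := by rw [hb]; linarith
      calc (p : ℝ) ≤ ((p : ℝ) + 1) * 1 := by linarith
        _ ≤ b * ∏ i : Fin (n + 1 - 1), (b + d i) :=
            mul_le_mul hbpos (le_trans hone h1) zero_le_one (by linarith [hx₀0, p.coe_nonneg])
        _ = g b := rfl
    have hx₀b : x₀ ≤ b := by rw [hb]; linarith [p.coe_nonneg]
    have hmem : (p : ℝ) ∈ Set.Icc (g x₀) (g b) := by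
      rw [hg0]; exact ⟨p.coe_nonneg, hgb⟩
    obtain ⟨x, hxI, hgx⟩ := intermediate_value_Icc hx₀b (hgc.continuousOn) hmem
    have hxx₀ : x₀ ≤ x := hxI.1
    -- construct the preimage
    set e : Fin (n + 1) → ℝ := Fin.cases 0 (fun i : Fin n => d ⟨i.1, by omega⟩) with he
    have hnn : ∀ j, 0 ≤ x + e j := by
      intro j
      induction j using Fin.cases with
      | zero => simp [he]; linarith
      | succ i =>
        have : e i.succ = d ⟨i.1, by omega⟩ := by rw [he]; simp
        rw [this]
        have := hx₀d ⟨i.1, by omega⟩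
        linarith
    refine ⟨fun j => Real.toNNReal (x + e j), ?_⟩
    have hcoe : ∀ j, ((Real.toNNReal (x + e j) : NNReal) : ℝ) = x + e j :=
      fun j => Real.coe_toNNReal _ (hnn j)
    rw [hF]
    refine Prod.ext ?_ ?_
    · funext i
      simp only
      rw [hidxs ⟨i.1, by omega⟩ (by omega), hidx0 (by omega)]
      rw [hcoe, hcoe]
      have h1 : e (Fin.succ ⟨i.1, by omega⟩) = d ⟨i.1, by omega⟩ := by rw [he]; simp
      have h2 : e 0 = 0 := by rw [he]; simp
      rw [h1, h2]
      have : (⟨i.1, by omega⟩ : Fin (n + 1 - 1)) = i := rfl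
      rw [this]
      ring
    · simp only
      apply NNReal.coe_injective
      rw [NNReal.coe_prod]
      calc ∏ j, ((Real.toNNReal (x + e j) : NNReal) : ℝ)
          = ∏ j, (x + e j) := Finset.prod_congr rfl fun j _ => hcoe j
        _ = (x + e 0) * ∏ i : Fin n, (x + e i.succ) := Fin.prod_univ_succ _
        _ = x * ∏ i : Fin (n + 1 - 1), (x + d i) := by
            have h2 : e 0 = 0 := by rw [he]; simp
            rw [h2, add_zero]
            congr 1
        _ = g x := rfl
        _ = p := hgx
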